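/- Let k > 0 and let f, g : [0, k] → ℝ be twice continuously differentiable with f'(s)² + g'(s)² = 1 and g'(s) ≠ 0 for all s ∈ [0, k]. Let α ∈ ℝ with sin α ≠ 0, and define the rotated profile f̄ = cos α·f + sin α·g, ḡ = cos α·g − sin α·f. For t ∈ (0, 1) let p_t denote the T-deformed curve of (f, g) and p̄_{t̂} the T-deformed curve of (f̄, ḡ) with parameter t̂. Suppose there is a nonempty open set T ⊆ (0, 1) such that for every t ∈ T there exists t̂ ∈ (0, 1) with ‖p_t''(s)‖ = ‖p̄_{t̂}''(s)‖ for all s ∈ [0, k] (the two deformed curves have identical curvature functions, hence are congruent). Then f and g are affine functions; i.e., the profile curve s ↦ (f(s), g(s)) is a straight line segment. -/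

import Mathlib

/-- The isometric deformation of T-type of a planar profile curve
`s ↦ (f s, g s)` with deformation parameter `t`, as a curve in the Euclidean
plane (modelled as `WithLp 2 (ℝ × ℝ)` so that `‖·‖` is the Euclidean norm). -/
noncomputable def Tdeform (f g : ℝ → ℝ) (t : ℝ) : ℝ → WithLp 2 (ℝ × ℝ) :=
  fun s => (WithLp.equiv 2 (ℝ × ℝ)).symm
    (t * f s,
      ∫ u in (0 : ℝ)..s,
        Real.sqrt ((1 - t ^ 2) * deriv f u ^ 2 + deriv g u ^ 2))

lemma contDiff_deriv1 {f : ℝ → ℝ} (hf : ContDiff ℝ 2 f) : ContDiff ℝ 1 (deriv f) :=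
  ((contDiff_succ_iff_deriv (n := 1)).mp (by exact_mod_cast hf)).2.2

lemma tdeform_hasDerivAt {f g : ℝ → ℝ} (hf : ContDiff ℝ 2 f) (hg : ContDiff ℝ 2 g)
    (t x : ℝ) :
    HasDerivAt (Tdeform f g t)
      ((WithLp.equiv 2 (ℝ × ℝ)).symm
        (t * deriv f x, Real.sqrt ((1 - t ^ 2) * deriv f x ^ 2 + deriv g x ^ 2))) x := by
  have hA : Continuous (deriv f) := (contDiff_deriv1 hf).continuous
  have hB : Continuous (deriv g) := (contDiff_deriv1 hg).continuous
  have hI : Continuous fun u => Real.sqrt ((1 - t ^ 2) * deriv f u ^ 2 + deriv g u ^ 2) := by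
    continuity
  have h2 : HasDerivAt (fun s => ∫ u in (0:ℝ)..s,
      Real.sqrt ((1 - t ^ 2) * deriv f u ^ 2 + deriv g u ^ 2))
      (Real.sqrt ((1 - t ^ 2) * deriv f x ^ 2 + deriv g x ^ 2)) x :=
    intervalIntegral.integral_hasDerivAt_right (hI.intervalIntegrable _ _)
      hI.aestronglyMeasurable.stronglyMeasurableAtFilter hI.continuousAt
  have h1 : HasDerivAt (fun s => t * f s) (t * deriv f x) x :=
    ((hf.differentiable (by norm_num) x).hasDerivAt).const_mul t
  have hp := h1.prodMk h2
  exact ((WithLp.prodContinuousLinearEquiv 2 ℝ ℝ ℝ).symm.toContinuousLinearMap.hasFDerivAt.comp_hasDerivAt x hp : _)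

lemma ortho_at {k : ℝ} {f g : ℝ → ℝ} (hf : ContDiff ℝ 2 f) (hg : ContDiff ℝ 2 g)
    (hunit : ∀ s ∈ Set.Icc (0 : ℝ) k, deriv f s ^ 2 + deriv g s ^ 2 = 1)
    {s : ℝ} (hs : s ∈ Set.Ioo (0 : ℝ) k) :
    deriv f s * deriv (deriv f) s + deriv g s * deriv (deriv g) s = 0 := by
  have hA : DifferentiableAt ℝ (deriv f) s :=
    ((contDiff_deriv1 hf).differentiable one_ne_zero) s
  have hB : DifferentiableAt ℝ (deriv g) s :=
    ((contDiff_deriv1 hg).differentiable one_ne_zero) s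
  have hD : HasDerivAt (fun u => deriv f u ^ 2 + deriv g u ^ 2)
      (2 * deriv f s * deriv (deriv f) s + 2 * deriv g s * deriv (deriv g) s) s := by
    have h1 := ((hA.hasDerivAt).pow 2)
    have h2 := ((hB.hasDerivAt).pow 2)
    have := h1.add h2
    convert this using 1
    · rfl
    · rfl
    · rfl
    · ring
  have heq : (fun u => deriv f u ^ 2 + deriv g u ^ 2) =ᶠ[nhds s] fun _ => (1:ℝ) := by
    filter_upwards [Ioo_mem_nhds hs.1 hs.2] with x hx
    exact hunit x (Set.mem_Icc_of_Ioo hx)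
  have h0 : deriv (fun u => deriv f u ^ 2 + deriv g u ^ 2) s = 0 := by
    rw [Filter.EventuallyEq.deriv_eq heq]; simp
  have := hD.deriv
  rw [h0] at this
  nlinarith [this]

lemma curv_sq {k : ℝ} {f g : ℝ → ℝ} (hf : ContDiff ℝ 2 f) (hg : ContDiff ℝ 2 g)
    (hunit : ∀ s ∈ Set.Icc (0 : ℝ) k, deriv f s ^ 2 + deriv g s ^ 2 = 1)
    {t : ℝ} (ht : t ∈ Set.Ioo (0 : ℝ) 1) {s : ℝ} (hs : s ∈ Set.Ioo (0 : ℝ) k) :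
    ‖deriv (deriv (Tdeform f g t)) s‖ ^ 2 =
      t ^ 2 * deriv (deriv f) s ^ 2 / (1 - t ^ 2 * deriv f s ^ 2) := by
  have hA : DifferentiableAt ℝ (deriv f) s :=
    ((contDiff_deriv1 hf).differentiable one_ne_zero) s
  have hB : DifferentiableAt ℝ (deriv g) s :=
    ((contDiff_deriv1 hg).differentiable one_ne_zero) s
  set A := deriv f with hAdef
  set B := deriv g with hBdef
  set A' := deriv (deriv f)
  set B' := deriv (deriv g)
  have hs' : s ∈ Set.Icc (0:ℝ) k := Set.mem_Icc_of_Ioo hs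
  have hAle : A s ^ 2 ≤ 1 := by nlinarith [hunit s hs', sq_nonneg (B s)]
  have ht2 : t ^ 2 < 1 := by nlinarith [ht.1, ht.2]
  have hPval : (1 - t ^ 2) * A s ^ 2 + B s ^ 2 = 1 - t ^ 2 * A s ^ 2 := by
    have := hunit s hs'; nlinarith [this]
  have hPpos : (0:ℝ) < (1 - t ^ 2) * A s ^ 2 + B s ^ 2 := by
    rw [hPval]; nlinarith [ht.1]
  -- first derivative of Tdeform as a function
  have hd1 : deriv (Tdeform f g t) = fun x =>
      (WithLp.equiv 2 (ℝ × ℝ)).symm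
        (t * A x, Real.sqrt ((1 - t ^ 2) * A x ^ 2 + B x ^ 2)) :=
    funext fun x => (tdeform_hasDerivAt hf hg t x).deriv
  -- derivative of the sqrt part at s
  have hP : HasDerivAt (fun u => (1 - t ^ 2) * A u ^ 2 + B u ^ 2)
      ((1 - t ^ 2) * (2 * A s * A' s) + 2 * B s * B' s) s := by
    have h1 := ((hA.hasDerivAt).pow 2).const_mul (1 - t ^ 2)
    have h2 := (hB.hasDerivAt).pow 2
    have := h1.add h2
    convert this using 1
    · rfl
    · rfl
    · rfl
    · ring
  have hPder : (1 - t ^ 2) * (2 * A s * A' s) + 2 * B s * B' s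
      = -2 * t ^ 2 * A s * A' s := by
    have := ortho_at hf hg hunit hs
    nlinarith [this]
  rw [hPder] at hP
  have hsqrt : HasDerivAt
      (fun u => Real.sqrt ((1 - t ^ 2) * A u ^ 2 + B u ^ 2))
      (1 / (2 * Real.sqrt ((1 - t ^ 2) * A s ^ 2 + B s ^ 2)) *
        (-2 * t ^ 2 * A s * A' s)) s :=
    (Real.hasDerivAt_sqrt (ne_of_gt hPpos)).comp s hP
  have h1 : HasDerivAt (fun x => t * A x) (t * A' s) s := hA.hasDerivAt.const_mul t
  have hpair := h1.prodMk hsqrt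
  have h2 : HasDerivAt (deriv (Tdeform f g t))
      ((WithLp.equiv 2 (ℝ × ℝ)).symm
        (t * A' s, 1 / (2 * Real.sqrt ((1 - t ^ 2) * A s ^ 2 + B s ^ 2)) *
          (-2 * t ^ 2 * A s * A' s))) s := by
    rw [hd1]
    exact ((WithLp.prodContinuousLinearEquiv 2 ℝ ℝ ℝ).symm.toContinuousLinearMap.hasFDerivAt.comp_hasDerivAt s hpair : _)
  rw [h2.deriv]
  rw [show ∀ u v : ℝ, ‖(WithLp.equiv 2 (ℝ × ℝ)).symm (u, v)‖ ^ 2 = u ^ 2 + v ^ 2 by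
    intro u v
    rw [WithLp.prod_norm_eq_of_L2, Real.sq_sqrt (by positivity)]
    simp [Real.norm_eq_abs, sq_abs]]
  have hsq : Real.sqrt ((1 - t ^ 2) * A s ^ 2 + B s ^ 2) ^ 2
      = (1 - t ^ 2) * A s ^ 2 + B s ^ 2 := Real.sq_sqrt (le_of_lt hPpos)
  have hsqpos : 0 < Real.sqrt ((1 - t ^ 2) * A s ^ 2 + B s ^ 2) :=
    Real.sqrt_pos.mpr hPpos
  rw [hPval] at hsq hsqpos ⊢
  have hden : (1 : ℝ) - t ^ 2 * A s ^ 2 > 0 := by nlinarith [ht.1]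
  field_simp
  rw [hsq]; ring

-- flat case helper
lemma const_on_Icc {φ : ℝ → ℝ} (hφ : Differentiable ℝ φ) {a b : ℝ} (hab : a ≤ b)
    (h0 : ∀ x ∈ Set.Ioo a b, deriv φ x = 0) : ∀ x ∈ Set.Icc a b, φ x = φ a := by
  have hmono : MonotoneOn φ (Set.Icc a b) := by
    apply monotoneOn_of_deriv_nonneg (convex_Icc a b) hφ.continuous.continuousOn
      (hφ.differentiableOn.mono interior_subset)
    intro x hx
    rw [interior_Icc] at hx
    exact le_of_eq (h0 x hx).symm
  have hanti : AntitoneOn φ (Set.Icc a b) := by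
    apply antitoneOn_of_deriv_nonpos (convex_Icc a b) hφ.continuous.continuousOn
      (hφ.differentiableOn.mono interior_subset)
    intro x hx
    rw [interior_Icc] at hx
    exact le_of_eq (h0 x hx)
  intro x hx
  have ha : a ∈ Set.Icc a b := ⟨le_refl a, hab⟩
  exact le_antisymm (hanti ha hx hx.1) (hmono ha hx hx.1)

-- final pointwise contradiction
lemma pointwise_contra {cα sα a b : ℝ} (hs : sα ≠ 0) (hb : b ≠ 0)
    (pyth : sα ^ 2 + cα ^ 2 = 1)
    (E1 : (cα * b - sα * a) ^ 2 = b ^ 2)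
    (E2 : (cα * a + sα * b) * (cα * b - sα * a) = a * b) : False := by
  have key1 : sα * (sα * (a ^ 2 - b ^ 2) - 2 * cα * a * b) = 0 := by
    linear_combination E1 - b ^ 2 * pyth
  have hP1 : sα * (a ^ 2 - b ^ 2) - 2 * cα * a * b = 0 :=
    (mul_eq_zero.mp key1).resolve_left hs
  have key2 : sα * (cα * (b ^ 2 - a ^ 2) - 2 * sα * a * b) = 0 := by
    linear_combination E2 - a * b * pyth
  have hP2 : cα * (b ^ 2 - a ^ 2) - 2 * sα * a * b = 0 :=
    (mul_eq_zero.mp key2).resolve_left hs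
  have hPzero : a ^ 2 - b ^ 2 = 0 := by
    linear_combination sα * hP1 - cα * hP2 - (a ^ 2 - b ^ 2) * pyth
  have hQzero : a * b = 0 := by
    linear_combination (-(1:ℝ)/2) * (sα * hP2) - (1/2) * (cα * hP1) - a * b * pyth
  have hb3 : b ^ 3 = 0 := by linear_combination a * hQzero - b * hPzero
  exact hb (by simpa using pow_eq_zero_iff (n := 3) (by norm_num) |>.mp hb3)

/-- Analytic core of Theorem 4 (thm:profil): if for an open set of deformation
parameters `t` the T-deformation of the profile and the T-deformation of the
profile rotated by an angle `α` (with `sin α ≠ 0`) have identical curvature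
functions (for a suitable parameter `t̂`), then the profile curve is a straight
line segment, i.e. `f` and `g` are affine on `[0, k]`. -/
theorem zip_row_profile_is_straight (k : ℝ) (hk : 0 < k) (f g : ℝ → ℝ)
    (hf : ContDiff ℝ 2 f) (hg : ContDiff ℝ 2 g)
    (hunit : ∀ s ∈ Set.Icc (0 : ℝ) k, deriv f s ^ 2 + deriv g s ^ 2 = 1)
    (hg' : ∀ s ∈ Set.Icc (0 : ℝ) k, deriv g s ≠ 0)
    (α : ℝ) (hα : Real.sin α ≠ 0)
    (T : Set ℝ) (hT : IsOpen T) (hTne : T.Nonempty) (hTsub : T ⊆ Set.Ioo 0 1)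
    (hcurv : ∀ t ∈ T, ∃ th ∈ Set.Ioo (0 : ℝ) 1, ∀ s ∈ Set.Icc (0 : ℝ) k,
      ‖deriv (deriv (Tdeform f g t)) s‖ =
        ‖deriv (deriv (Tdeform
            (fun s => Real.cos α * f s + Real.sin α * g s)
            (fun s => Real.cos α * g s - Real.sin α * f s) th)) s‖) :
    ∃ a b c d : ℝ, ∀ s ∈ Set.Icc (0 : ℝ) k,
      f s = a * s + b ∧ g s = c * s + d := by
  have hfd : Differentiable ℝ f := hf.differentiable (by norm_num)
  have hgd : Differentiable ℝ g := hg.differentiable (by norm_num)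
  have hAd : Differentiable ℝ (deriv f) := (contDiff_deriv1 hf).differentiable one_ne_zero
  have hBd : Differentiable ℝ (deriv g) := (contDiff_deriv1 hg).differentiable one_ne_zero
  have hA'cont : Continuous (deriv (deriv f)) :=
    (contDiff_deriv1 hf).continuous_deriv le_rfl
  by_cases hflat : ∀ x ∈ Set.Ioo (0:ℝ) k, deriv (deriv f) x = 0
  · -- flat case : profile is a straight segment
    have hB'0 : ∀ x ∈ Set.Ioo (0:ℝ) k, deriv (deriv g) x = 0 := by
      intro x hx
      have ho := ortho_at hf hg hunit hx
      have hb := hg' x (Set.mem_Icc_of_Ioo hx)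
      rw [hflat x hx] at ho
      have hz : deriv g x * deriv (deriv g) x = 0 := by linarith
      exact (mul_eq_zero.mp hz).resolve_left hb
    have hAconst : ∀ x ∈ Set.Icc (0:ℝ) k, deriv f x = deriv f 0 :=
      const_on_Icc hAd hk.le hflat
    have hBconst : ∀ x ∈ Set.Icc (0:ℝ) k, deriv g x = deriv g 0 :=
      const_on_Icc hBd hk.le hB'0
    refine ⟨deriv f 0, f 0, deriv g 0, g 0, fun x hx => ⟨?_, ?_⟩⟩
    · have h := const_on_Icc (φ := fun u => f u - deriv f 0 * u)
        (hfd.sub (differentiable_id.const_mul _)) hk.le ?_ x hx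
      · simp only [mul_zero, sub_zero] at h; linarith
      · intro y hy
        have hlin : HasDerivAt (fun u : ℝ => deriv f 0 * u) (deriv f 0) y := by
          simpa using (hasDerivAt_id y).const_mul (deriv f 0)
        have hd : HasDerivAt (fun u => f u - deriv f 0 * u) (deriv f y - deriv f 0) y :=
          (hfd y).hasDerivAt.sub hlin
        rw [hd.deriv, hAconst y (Set.mem_Icc_of_Ioo hy), sub_self]
    · have h := const_on_Icc (φ := fun u => g u - deriv g 0 * u)
        (hgd.sub (differentiable_id.const_mul _)) hk.le ?_ x hx
      · simp only [mul_zero, sub_zero] at h; linarith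
      · intro y hy
        have hlin : HasDerivAt (fun u : ℝ => deriv g 0 * u) (deriv g 0) y := by
          simpa using (hasDerivAt_id y).const_mul (deriv g 0)
        have hd : HasDerivAt (fun u => g u - deriv g 0 * u) (deriv g y - deriv g 0) y :=
          (hgd y).hasDerivAt.sub hlin
        rw [hd.deriv, hBconst y (Set.mem_Icc_of_Ioo hy), sub_self]
  · -- main case : derive a contradiction
    exfalso
    push_neg at hflat
    obtain ⟨s₀, hs₀I, hA'0⟩ := hflat
    set fb : ℝ → ℝ := fun u => Real.cos α * f u + Real.sin α * g u with hfbdef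
    set gb : ℝ → ℝ := fun u => Real.cos α * g u - Real.sin α * f u with hgbdef
    have hfb : ContDiff ℝ 2 fb := (contDiff_const.mul hf).add (contDiff_const.mul hg)
    have hgb : ContDiff ℝ 2 gb := (contDiff_const.mul hg).sub (contDiff_const.mul hf)
    have hAb : deriv fb = fun u => Real.cos α * deriv f u + Real.sin α * deriv g u := by
      funext x
      exact (((hfd x).hasDerivAt.const_mul _).add ((hgd x).hasDerivAt.const_mul _)).deriv
    have hBb : deriv gb = fun u => Real.cos α * deriv g u - Real.sin α * deriv f u := by
      funext x
      exact (((hgd x).hasDerivAt.const_mul _).sub ((hfd x).hasDerivAt.const_mul _)).deriv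
    have hAb2 : deriv (fun u => Real.cos α * deriv f u + Real.sin α * deriv g u) =
        fun u => Real.cos α * deriv (deriv f) u + Real.sin α * deriv (deriv g) u := by
      funext x
      exact (((hAd x).hasDerivAt.const_mul _).add ((hBd x).hasDerivAt.const_mul _)).deriv
    have hunitb : ∀ x ∈ Set.Icc (0:ℝ) k, deriv fb x ^ 2 + deriv gb x ^ 2 = 1 := by
      intro x hx
      rw [hAb, hBb]
      have := hunit x hx
      have hpy := Real.sin_sq_add_cos_sq α
      simp only
      nlinarith [this, hpy]
    -- the interval U around s₀ on which f'' doesn't vanish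
    have hopen : IsOpen ({x | deriv (deriv f) x ≠ 0} ∩ Set.Ioo 0 k) :=
      (isOpen_compl_singleton.preimage hA'cont).inter isOpen_Ioo
    obtain ⟨ε, hε, hball⟩ := Metric.isOpen_iff.mp hopen s₀ ⟨hA'0, hs₀I⟩
    rw [Real.ball_eq_Ioo] at hball
    have hUsub : Set.Ioo (s₀ - ε) (s₀ + ε) ⊆ Set.Ioo 0 k := fun x hx => (hball hx).2
    have hU0 : ∀ x ∈ Set.Ioo (s₀ - ε) (s₀ + ε), deriv (deriv f) x ≠ 0 :=
      fun x hx => (hball hx).1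
    have hs₀U : s₀ ∈ Set.Ioo (s₀ - ε) (s₀ + ε) := by constructor <;> linarith
    -- two deformation parameters
    obtain ⟨t₁, ht₁⟩ := hTne
    obtain ⟨ε', hε', hball'⟩ := Metric.isOpen_iff.mp hT t₁ ht₁
    have ht₂ : t₁ + ε' / 2 ∈ T := by
      apply hball'
      rw [Metric.mem_ball, Real.dist_eq, show t₁ + ε'/2 - t₁ = ε'/2 by ring,
        abs_of_pos (by linarith)]
      linarith
    set t₂ := t₁ + ε' / 2 with ht₂def
    have ht₁I := hTsub ht₁
    have ht₂I := hTsub ht₂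
    have htne : t₂ ^ 2 - t₁ ^ 2 ≠ 0 := by
      intro h
      rw [ht₂def] at h
      nlinarith [ht₁I.1, hε']
    obtain ⟨u₁, hu₁I, hcurv₁⟩ := hcurv t₁ ht₁
    obtain ⟨u₂, hu₂I, hcurv₂⟩ := hcurv t₂ ht₂
    -- abbreviations
    set M : ℝ → ℝ := fun u => Real.cos α * deriv (deriv f) u + Real.sin α * deriv (deriv g) u
      with hMdef
    set Ab : ℝ → ℝ := fun u => Real.cos α * deriv f u + Real.sin α * deriv g u with hAbdef
    set Bb : ℝ → ℝ := fun u => Real.cos α * deriv g u - Real.sin α * deriv f u with hBbdef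
    -- cross-multiplied curvature identity
    have hEq : ∀ (t u : ℝ), t ∈ Set.Ioo (0:ℝ) 1 → u ∈ Set.Ioo (0:ℝ) 1 →
        (∀ x ∈ Set.Icc (0:ℝ) k, ‖deriv (deriv (Tdeform f g t)) x‖ =
          ‖deriv (deriv (Tdeform fb gb u)) x‖) →
        ∀ x ∈ Set.Ioo (0:ℝ) k,
        u ^ 2 * (M x ^ 2 * (1 - t ^ 2 * deriv f x ^ 2) +
          t ^ 2 * deriv (deriv f) x ^ 2 * Ab x ^ 2)
        = t ^ 2 * deriv (deriv f) x ^ 2 := by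
      intro t u htI huI hcv x hx
      have h1 := curv_sq hf hg hunit htI hx
      have h2 := curv_sq hfb hgb hunitb huI hx
      have he := hcv x (Set.mem_Icc_of_Ioo hx)
      have hEE : t ^ 2 * deriv (deriv f) x ^ 2 / (1 - t ^ 2 * deriv f x ^ 2) =
          u ^ 2 * deriv (deriv fb) x ^ 2 / (1 - u ^ 2 * deriv fb x ^ 2) := by
        rw [← h1, ← h2, he]
      have hx' := Set.mem_Icc_of_Ioo hx
      have hd1 : (0:ℝ) < 1 - t ^ 2 * deriv f x ^ 2 := by
        nlinarith [hunit x hx', sq_nonneg (deriv g x), htI.1, htI.2, sq_nonneg (deriv f x)]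
      have hd2 : (0:ℝ) < 1 - u ^ 2 * deriv fb x ^ 2 := by
        nlinarith [hunitb x hx', sq_nonneg (deriv gb x), huI.1, huI.2, sq_nonneg (deriv fb x)]
      simp only [hAb, hAb2] at hEE hd2
      field_simp [hd1.ne', hd2.ne'] at hEE
      linear_combination -hEE
    have hE1 := hEq t₁ u₁ ht₁I hu₁I hcurv₁
    have hE2 := hEq t₂ u₂ ht₂I hu₂I hcurv₂
    have hMrel : ∀ x ∈ Set.Ioo (0:ℝ) k, M x * deriv g x = deriv (deriv f) x * Bb x := by
      intro x hx
      have ho := ortho_at hf hg hunit hx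
      simp only [hMdef, hBbdef]
      linear_combination Real.sin α * ho
    -- constancy of (gb')²/(g')² on U
    have hconst : ∀ x ∈ Set.Ioo (s₀ - ε) (s₀ + ε),
        Bb x ^ 2 * deriv g s₀ ^ 2 = Bb s₀ ^ 2 * deriv g x ^ 2 := by
      intro x hx
      have hxI := hUsub hx
      have hm := hU0 x hx
      have e1x := hE1 x hxI
      have e10 := hE1 s₀ hs₀I
      have e2x := hE2 x hxI
      have e20 := hE2 s₀ hs₀I
      have hu₁0 : u₁ ≠ 0 := ne_of_gt hu₁I.1
      have hu₂0 : u₂ ≠ 0 := ne_of_gt hu₂I.1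
      have g1 : deriv (deriv f) s₀ ^ 2 * (M x ^ 2 * (1 - t₁ ^ 2 * deriv f x ^ 2) +
            t₁ ^ 2 * deriv (deriv f) x ^ 2 * Ab x ^ 2) =
          deriv (deriv f) x ^ 2 * (M s₀ ^ 2 * (1 - t₁ ^ 2 * deriv f s₀ ^ 2) +
            t₁ ^ 2 * deriv (deriv f) s₀ ^ 2 * Ab s₀ ^ 2) := by
        have hz : u₁ ^ 2 * (deriv (deriv f) s₀ ^ 2 * (M x ^ 2 * (1 - t₁ ^ 2 * deriv f x ^ 2) +
              t₁ ^ 2 * deriv (deriv f) x ^ 2 * Ab x ^ 2) -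
            deriv (deriv f) x ^ 2 * (M s₀ ^ 2 * (1 - t₁ ^ 2 * deriv f s₀ ^ 2) +
              t₁ ^ 2 * deriv (deriv f) s₀ ^ 2 * Ab s₀ ^ 2)) = 0 := by
          linear_combination deriv (deriv f) s₀ ^ 2 * e1x - deriv (deriv f) x ^ 2 * e10
        have := (mul_eq_zero.mp hz).resolve_left (pow_ne_zero 2 hu₁0)
        linarith
      have g2 : deriv (deriv f) s₀ ^ 2 * (M x ^ 2 * (1 - t₂ ^ 2 * deriv f x ^ 2) +
            t₂ ^ 2 * deriv (deriv f) x ^ 2 * Ab x ^ 2) =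
          deriv (deriv f) x ^ 2 * (M s₀ ^ 2 * (1 - t₂ ^ 2 * deriv f s₀ ^ 2) +
            t₂ ^ 2 * deriv (deriv f) s₀ ^ 2 * Ab s₀ ^ 2) := by
        have hz : u₂ ^ 2 * (deriv (deriv f) s₀ ^ 2 * (M x ^ 2 * (1 - t₂ ^ 2 * deriv f x ^ 2) +
              t₂ ^ 2 * deriv (deriv f) x ^ 2 * Ab x ^ 2) -
            deriv (deriv f) x ^ 2 * (M s₀ ^ 2 * (1 - t₂ ^ 2 * deriv f s₀ ^ 2) +
              t₂ ^ 2 * deriv (deriv f) s₀ ^ 2 * Ab s₀ ^ 2)) = 0 := by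
          linear_combination deriv (deriv f) s₀ ^ 2 * e2x - deriv (deriv f) x ^ 2 * e20
        have := (mul_eq_zero.mp hz).resolve_left (pow_ne_zero 2 hu₂0)
        linarith
      have ha : (t₂ ^ 2 - t₁ ^ 2) *
          (deriv (deriv f) s₀ ^ 2 * M x ^ 2 - deriv (deriv f) x ^ 2 * M s₀ ^ 2) = 0 := by
        linear_combination t₂ ^ 2 * g1 - t₁ ^ 2 * g2
      have ha0 : deriv (deriv f) s₀ ^ 2 * M x ^ 2 = deriv (deriv f) x ^ 2 * M s₀ ^ 2 := by
        have := (mul_eq_zero.mp ha).resolve_left htne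
        linarith
      have hMx2 : (M x * deriv g x) ^ 2 = (deriv (deriv f) x * Bb x) ^ 2 := by
        rw [hMrel x hxI]
      have hM02 : (M s₀ * deriv g s₀) ^ 2 = (deriv (deriv f) s₀ * Bb s₀) ^ 2 := by
        rw [hMrel s₀ hs₀I]
      have hfin : (deriv (deriv f) x ^ 2 * deriv (deriv f) s₀ ^ 2) *
            (Bb x ^ 2 * deriv g s₀ ^ 2) =
          (deriv (deriv f) x ^ 2 * deriv (deriv f) s₀ ^ 2) *
            (Bb s₀ ^ 2 * deriv g x ^ 2) := by
        linear_combination (-(deriv (deriv f) s₀ ^ 2 * deriv g s₀ ^ 2)) * hMx2 +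
          deriv (deriv f) x ^ 2 * deriv g x ^ 2 * hM02 +
          deriv g x ^ 2 * deriv g s₀ ^ 2 * ha0
      exact mul_left_cancel₀
        (mul_ne_zero (pow_ne_zero 2 hm) (pow_ne_zero 2 hA'0)) hfin
    have hb₀ : deriv g s₀ ≠ 0 := hg' s₀ (Set.mem_Icc_of_Ioo hs₀I)
    set q : ℝ := Bb s₀ ^ 2 / deriv g s₀ ^ 2 with hqdef
    have hq : ∀ x ∈ Set.Ioo (s₀ - ε) (s₀ + ε), Bb x ^ 2 = q * deriv g x ^ 2 := by
      intro x hx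
      rw [hqdef, div_mul_eq_mul_div, eq_div_iff (pow_ne_zero 2 hb₀)]
      exact hconst x hx
    -- derivative helpers
    have hAdiff : ∀ y : ℝ, HasDerivAt (deriv f) (deriv (deriv f) y) y :=
      fun y => (hAd y).hasDerivAt
    have hBdiff : ∀ y : ℝ, HasDerivAt (deriv g) (deriv (deriv g) y) y :=
      fun y => (hBd y).hasDerivAt
    have hAbdiff : ∀ y : ℝ, HasDerivAt Ab
        (Real.cos α * deriv (deriv f) y + Real.sin α * deriv (deriv g) y) y := by
      intro y
      rw [hAbdef]
      exact ((hAdiff y).const_mul _).add ((hBdiff y).const_mul _)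
    have hBbdiff : ∀ y : ℝ, HasDerivAt Bb
        (Real.cos α * deriv (deriv g) y - Real.sin α * deriv (deriv f) y) y := by
      intro y
      rw [hBbdef]
      exact ((hBdiff y).const_mul _).sub ((hAdiff y).const_mul _)
    -- first differentiation of the constancy relation
    have hstep1 : ∀ x ∈ Set.Ioo (s₀ - ε) (s₀ + ε),
        Bb x * (Real.cos α * deriv (deriv g) x - Real.sin α * deriv (deriv f) x) =
          q * (deriv g x * deriv (deriv g) x) := by
      intro x hx
      have hev : (fun u => Bb u ^ 2 - q * deriv g u ^ 2) =ᶠ[nhds x] fun _ => (0:ℝ) := by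
        filter_upwards [Ioo_mem_nhds hx.1 hx.2] with y hy
        have := hq y hy
        simp [this]
      have hder0 : deriv (fun u => Bb u ^ 2 - q * deriv g u ^ 2) x = 0 := by
        rw [hev.deriv_eq]
        simp
      have hH : HasDerivAt (fun u => Bb u ^ 2 - q * deriv g u ^ 2)
          (2 * Bb x * (Real.cos α * deriv (deriv g) x - Real.sin α * deriv (deriv f) x) -
            q * (2 * deriv g x * deriv (deriv g) x)) x := by
        have h1 := (hBbdiff x).pow 2
        have h2 := ((hBdiff x).pow 2).const_mul q
        have h3 := h1.sub h2
        convert h3 using 1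
        · rfl
        · rfl
        · rfl
        · ring
      have hd := hH.deriv
      rw [hder0] at hd
      linarith
    -- the product relation on U
    have hpsi : ∀ x ∈ Set.Ioo (s₀ - ε) (s₀ + ε),
        Ab x * Bb x = q * (deriv f x * deriv g x) := by
      intro x hx
      have h1 := hstep1 x hx
      have ho := ortho_at hf hg hunit (hUsub hx)
      have hm := hU0 x hx
      have hz : deriv (deriv f) x * (Ab x * Bb x - q * (deriv f x * deriv g x)) = 0 := by
        simp only [hAbdef, hBbdef] at h1 ⊢
        linear_combination (-(deriv g x)) * h1 +
          (Real.cos α * (Real.cos α * deriv g x - Real.sin α * deriv f x) -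
            q * deriv g x) * ho
      have := (mul_eq_zero.mp hz).resolve_left hm
      linarith
    -- second differentiation, at s₀
    have hpsi_ev : (fun u => Ab u * Bb u - q * (deriv f u * deriv g u)) =ᶠ[nhds s₀]
        fun _ => (0:ℝ) := by
      filter_upwards [Ioo_mem_nhds hs₀U.1 hs₀U.2] with y hy
      have := hpsi y hy
      simp [this]
    have hder0' : deriv (fun u => Ab u * Bb u - q * (deriv f u * deriv g u)) s₀ = 0 := by
      rw [hpsi_ev.deriv_eq]
      simp
    have hH2 : HasDerivAt (fun u => Ab u * Bb u - q * (deriv f u * deriv g u))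
        ((Real.cos α * deriv (deriv f) s₀ + Real.sin α * deriv (deriv g) s₀) * Bb s₀ +
          Ab s₀ * (Real.cos α * deriv (deriv g) s₀ - Real.sin α * deriv (deriv f) s₀) -
          q * (deriv (deriv f) s₀ * deriv g s₀ + deriv f s₀ * deriv (deriv g) s₀)) s₀ := by
      have h1 := (hAbdiff s₀).mul (hBbdiff s₀)
      have h2 := ((hAdiff s₀).mul (hBdiff s₀)).const_mul q
      exact h1.sub h2
    have hkey2 := hH2.deriv
    rw [hder0'] at hkey2
    have ho₀ := ortho_at hf hg hunit hs₀I
    have hz2 : deriv (deriv f) s₀ * ((Bb s₀ ^ 2 - Ab s₀ ^ 2) -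
        q * (deriv g s₀ ^ 2 - deriv f s₀ ^ 2)) = 0 := by
      simp only [hAbdef, hBbdef] at hkey2 ⊢
      linear_combination (-(deriv g s₀)) * hkey2 +
        (q * deriv f s₀ -
          Real.sin α * (Real.cos α * deriv g s₀ - Real.sin α * deriv f s₀) -
          Real.cos α * (Real.cos α * deriv f s₀ + Real.sin α * deriv g s₀)) * ho₀
    have e3 : (Bb s₀ ^ 2 - Ab s₀ ^ 2) - q * (deriv g s₀ ^ 2 - deriv f s₀ ^ 2) = 0 :=
      (mul_eq_zero.mp hz2).resolve_left hA'0
    have e_i := hq s₀ hs₀U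
    have e_ii := hpsi s₀ hs₀U
    have hunit₀ := hunit s₀ (Set.mem_Icc_of_Ioo hs₀I)
    have pyth := Real.sin_sq_add_cos_sq α
    have eA : Ab s₀ ^ 2 = q * deriv f s₀ ^ 2 := by linear_combination e_i - e3
    have hq1 : q = 1 := by
      simp only [hAbdef, hBbdef] at eA e_i
      linear_combination (1 - q) * hunit₀ - eA - e_i +
        (deriv f s₀ ^ 2 + deriv g s₀ ^ 2) * pyth
    rw [hq1, one_mul] at e_i e_ii
    simp only [hAbdef, hBbdef] at e_i e_ii
    exact pointwise_contra hα hb₀ pyth e_i e_ii
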